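/- Let F be a free filter on ℕ and ξ(F) the space ℕ ∪ {F} in which points of ℕ are isolated and neighborhoods of the point F are the sets A ∪ {F} with A ∈ F. If the hyperspace S_c(ξ(F)) is not meager in itself, then F is an α₂-filter: for every countable family {S_n : n ∈ ℕ} of nontrivial sequences in ξ(F) converging to the point F, there exists a nontrivial sequence T converging to F with T ∩ S_n infinite for all n. -/
import Mathlib


open Set TopologicalSpace Filter
open Topology

/-- The Vietoris topology on collections of subsets of `X`. -/
def vietoris (X : Type*) [TopologicalSpace X] : TopologicalSpace (Set X) :=
  TopologicalSpace.generateFrom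
    ({t | ∃ U : Set X, IsOpen U ∧ t = {S : Set X | S ⊆ U}} ∪
     {t | ∃ U : Set X, IsOpen U ∧ t = {S : Set X | (S ∩ U).Nonempty}})

/-- The set `S` converges to `x`: `x ∈ S` and `S \ U` is finite for every open
neighborhood `U` of `x`. -/
def ConvTo {X : Type*} [TopologicalSpace X] (S : Set X) (x : X) : Prop :=
  x ∈ S ∧ ∀ U : Set X, IsOpen U → x ∈ U → (S \ U).Finite

/-- `S` is a nontrivial convergent sequence in `X`: a countably infinite closed set with a
unique non-isolated point `x` (all other points are isolated in `S`), converging to `x`. -/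
def IsNCS (X : Type*) [TopologicalSpace X] (S : Set X) : Prop :=
  S.Infinite ∧ S.Countable ∧ IsClosed S ∧ ∃ x : X, ConvTo S x ∧
    (∀ y ∈ S, y ≠ x → ∃ U : Set X, IsOpen U ∧ U ∩ S = {y}) ∧
    ¬ ∃ U : Set X, IsOpen U ∧ U ∩ S = {x}

/-- The hyperspace of nontrivial convergent sequences of `X`. -/
def Sc (X : Type*) [TopologicalSpace X] : Type _ :=
  {S : Set X // IsNCS X S}

instance (X : Type*) [TopologicalSpace X] : TopologicalSpace (Sc X) :=
  TopologicalSpace.induced (fun S : Sc X => S.1) (vietoris X)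


/-- The topology of the space `ξ(F) = ℕ ∪ {F}` (coded as `Option ℕ`, with `none` playing
the role of the point `F`): points of `ℕ` are isolated, and neighborhoods of `none`
are the sets `A ∪ {none}` with `A ∈ F`. -/
def xiTop (F : Filter ℕ) : TopologicalSpace (Option ℕ) where
  IsOpen U := none ∈ U → {n : ℕ | some n ∈ U} ∈ F
  isOpen_univ := fun _ => Filter.univ_mem
  isOpen_inter := fun U V hU hV h => Filter.inter_mem (hU h.1) (hV h.2)
  isOpen_sUnion := fun s hs h => by
    obtain ⟨t, ht, hnt⟩ := h
    exact Filter.mem_of_superset (hs t ht hnt) (fun n hn => ⟨t, ht, hn⟩)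



theorem xi_open {F : Filter ℕ} {U : Set (Option ℕ)}
    (h : none ∈ U → {n : ℕ | some n ∈ U} ∈ F) : IsOpen[xiTop F] U := h

theorem xi_open' {F : Filter ℕ} {U : Set (Option ℕ)}
    (h : IsOpen[xiTop F] U) : none ∈ U → {n : ℕ | some n ∈ U} ∈ F := h

theorem xi_convTo (F : Filter ℕ) :
    letI : TopologicalSpace (Option ℕ) := xiTop F
    ∀ T : Sc (Option ℕ), ConvTo T.1 none := by
  letI : TopologicalSpace (Option ℕ) := xiTop F
  intro T
  obtain ⟨-, -, -, x, hconv, -, hnot⟩ := T.2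
  cases x with
  | none => exact hconv
  | some m =>
    exfalso
    refine hnot ⟨{some m}, xi_open (fun h => by simp at h), ?_⟩
    ext y
    simp only [Set.mem_inter_iff, Set.mem_singleton_iff]
    exact ⟨fun h => h.1, fun h => ⟨h, h ▸ hconv.1⟩⟩

theorem xi_isNCS (F : Filter ℕ) :
    letI : TopologicalSpace (Option ℕ) := xiTop F
    ∀ s : Set (Option ℕ), s.Infinite → ConvTo s none → IsNCS (Option ℕ) s := by
  letI : TopologicalSpace (Option ℕ) := xiTop F
  intro s hinf hconv
  refine ⟨hinf, s.to_countable, ⟨xi_open fun h => absurd hconv.1 h⟩, none, hconv, ?_, ?_⟩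
  · intro y hy hyne
    obtain ⟨m, rfl⟩ := Option.ne_none_iff_exists'.1 hyne
    refine ⟨{some m}, xi_open (fun h => by simp at h), ?_⟩
    ext z
    simp only [Set.mem_inter_iff, Set.mem_singleton_iff]
    exact ⟨fun h => h.1, fun h => ⟨h, h ▸ hy⟩⟩
  · rintro ⟨U, hU, hUs⟩
    have hnU : none ∈ U := by
      have : none ∈ U ∩ s := hUs ▸ rfl
      exact this.1
    have hfin : (s \ U).Finite := hconv.2 U hU hnU
    have hsub : s \ {none} ⊆ s \ U := by
      rintro x ⟨hxs, hxn⟩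
      refine ⟨hxs, fun hxU => hxn ?_⟩
      have : x ∈ U ∩ s := ⟨hxU, hxs⟩
      rw [hUs] at this
      exact this
    have : s.Finite := by
      have h1 : (s \ {none}).Finite := hfin.subset hsub
      have : s ⊆ insert none (s \ {none}) := by
        intro x hx
        by_cases hxn : x = none
        · exact hxn ▸ Set.mem_insert _ _
        · exact Set.mem_insert_of_mem _ ⟨hx, hxn⟩
      exact (h1.insert none).subset this
    exact hinf this

theorem xi_insert (F : Filter ℕ) :
    letI : TopologicalSpace (Option ℕ) := xiTop F
    ∀ s : Set (Option ℕ), s.Infinite → ConvTo s none → ∀ j : ℕ,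
      (insert (some j) s).Infinite ∧ ConvTo (insert (some j) s) none := by
  letI : TopologicalSpace (Option ℕ) := xiTop F
  intro s hinf hconv j
  refine ⟨hinf.mono (s.subset_insert _), Set.mem_insert_of_mem _ hconv.1, ?_⟩
  intro U hU hnU
  have : insert (some j) s \ U ⊆ insert (some j) (s \ U) := by
    rintro x ⟨hx, hxU⟩
    rcases hx with rfl | hx
    · exact Set.mem_insert _ _
    · exact Set.mem_insert_of_mem _ ⟨hx, hxU⟩
  exact ((hconv.2 U hU hnU).insert _).subset this

theorem xi_key (F : Filter ℕ) :
    letI : TopologicalSpace (Option ℕ) := xiTop F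
    ∀ V : Set (Set (Option ℕ)), IsOpen[vietoris (Option ℕ)] V →
      ∀ s ∈ V, none ∈ s → ConvTo s none →
        ∃ A ∈ F, ∀ j ∈ A, insert (some j) s ∈ V := by
  letI : TopologicalSpace (Option ℕ) := xiTop F
  intro V hV
  have hV' : TopologicalSpace.GenerateOpen
      ({t | ∃ U : Set (Option ℕ), IsOpen U ∧ t = {S : Set (Option ℕ) | S ⊆ U}} ∪
       {t | ∃ U : Set (Option ℕ), IsOpen U ∧ t = {S : Set (Option ℕ) | (S ∩ U).Nonempty}}) V := hV
  clear hV
  induction hV' with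
  | basic t ht =>
    rcases ht with ⟨U, hU, rfl⟩ | ⟨U, hU, rfl⟩
    · intro s hs hns _
      refine ⟨{n | some n ∈ U}, xi_open' hU (hs hns), fun j hj => ?_⟩
      exact Set.insert_subset hj hs
    · intro s hs _ _
      exact ⟨Set.univ, Filter.univ_mem, fun j _ =>
        hs.mono (Set.inter_subset_inter_left _ (s.subset_insert _))⟩
  | univ => exact fun s _ _ _ => ⟨Set.univ, Filter.univ_mem, fun _ _ => trivial⟩
  | inter V₁ V₂ _ _ ih₁ ih₂ =>
    intro s hs hns hc
    obtain ⟨A₁, hA₁, h₁⟩ := ih₁ s hs.1 hns hc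
    obtain ⟨A₂, hA₂, h₂⟩ := ih₂ s hs.2 hns hc
    exact ⟨A₁ ∩ A₂, Filter.inter_mem hA₁ hA₂, fun j hj => ⟨h₁ j hj.1, h₂ j hj.2⟩⟩
  | sUnion K _ ih =>
    intro s hs hns hc
    obtain ⟨t, htK, hst⟩ := hs
    obtain ⟨A, hA, h⟩ := ih t htK s hst hns hc
    exact ⟨A, hA, fun j hj => ⟨t, htK, h j hj⟩⟩


/-- If `F` is a free (Fréchet–Urysohn) filter on `ℕ` and `S_c(ξ(F))` is not
meager in itself, then `F` is an `α₂`-filter: for every countable family of nontrivial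
convergent sequences converging to the point `F`, there is a nontrivial convergent
sequence `T` converging to `F` meeting each of them in an infinite set. -/
theorem stmt7 (F : Filter ℕ) (hfree : F ≤ Filter.cofinite) :
    letI : TopologicalSpace (Option ℕ) := xiTop F
    FrechetUrysohnSpace (Option ℕ) →
    ¬ IsMeagre (Set.univ : Set (Sc (Option ℕ))) →
    ∀ S : ℕ → Sc (Option ℕ), (∀ n, ConvTo (S n).1 none) →
      ∃ T : Sc (Option ℕ), ConvTo T.1 none ∧ ∀ n, (T.1 ∩ (S n).1).Infinite := by
  letI : TopologicalSpace (Option ℕ) := xiTop F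
  letI : TopologicalSpace (Set (Option ℕ)) := vietoris (Option ℕ)
  intro _ hmeager S hconv
  -- the dense open sets
  set D : ℕ × ℕ → Set (Sc (Option ℕ)) :=
    fun p => {T | ∃ j, p.2 ≤ j ∧ some j ∈ (S p.1).1 ∧ some j ∈ T.1} with hD
  have hopen : ∀ p, IsOpen (D p) := by
    intro p
    have : D p = ⋃ j ∈ {j : ℕ | p.2 ≤ j ∧ some j ∈ (S p.1).1},
        {T : Sc (Option ℕ) | some j ∈ T.1} := by
      ext T
      simp only [hD, Set.mem_setOf_eq, Set.mem_iUnion]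
      constructor
      · rintro ⟨j, h1, h2, h3⟩; exact ⟨j, ⟨h1, h2⟩, h3⟩
      · rintro ⟨j, ⟨h1, h2⟩, h3⟩; exact ⟨j, h1, h2, h3⟩
    rw [this]
    refine isOpen_biUnion (fun j _ => ?_)
    refine isOpen_induced_iff.2 ⟨{s : Set (Option ℕ) | (s ∩ {some j}).Nonempty}, ?_, ?_⟩
    · exact TopologicalSpace.isOpen_generateFrom_of_mem
        (Or.inr ⟨{some j}, xi_open (fun h => by simp at h), rfl⟩)
    · ext T
      simp [Set.inter_singleton_nonempty]
  have hdense : ∀ p, Dense (D p) := by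
    intro p
    rw [dense_iff_inter_open]
    intro O hO ⟨T₀, hT₀⟩
    obtain ⟨V, hVopen, rfl⟩ := isOpen_induced_iff.1 hO
    have hc0 : ConvTo T₀.1 none := xi_convTo F T₀
    obtain ⟨A, hAF, hA⟩ := xi_key F V hVopen T₀.1 hT₀ hc0.1 hc0
    -- find j ∈ A, p.2 ≤ j, some j ∈ (S p.1).1
    set U : Set (Option ℕ) := insert none (some '' A) with hU
    have hUopen : IsOpen U := by
      refine xi_open (fun _ => ?_)
      refine Filter.mem_of_superset hAF (fun n hn => ?_)
      exact Set.mem_insert_of_mem _ ⟨n, hn, rfl⟩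
    have hfin : ((S p.1).1 \ U).Finite := (hconv p.1).2 U hUopen (Set.mem_insert _ _)
    have hinter : ((S p.1).1 ∩ U).Infinite := by
      have := ((S p.1).2.1).diff hfin
      rwa [Set.diff_diff_right_self] at this
    set J : Set ℕ := {j ∈ A | some j ∈ (S p.1).1} with hJ
    have hJinf : J.Infinite := by
      intro hJfin
      refine hinter ?_
      refine ((hJfin.image some).insert none).subset ?_
      rintro x ⟨hxS, hxU⟩
      rcases hxU with rfl | ⟨n, hn, rfl⟩
      · exact Set.mem_insert _ _
      · exact Set.mem_insert_of_mem _ ⟨n, ⟨hn, hxS⟩, rfl⟩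
    obtain ⟨j, hjJ, hjgt⟩ := hJinf.exists_gt p.2
    have hNCS : IsNCS (Option ℕ) (insert (some j) T₀.1) := by
      obtain ⟨hinf', hconv'⟩ := xi_insert F T₀.1 T₀.2.1 hc0 j
      exact xi_isNCS F _ hinf' hconv'
    refine ⟨⟨_, hNCS⟩, hA j hjJ.1, j, le_of_lt hjgt, hjJ.2, Set.mem_insert _ _⟩
  -- intersection is nonempty
  have hne : (⋂ p, D p).Nonempty := by
    rw [Set.nonempty_iff_ne_empty]
    intro hempty
    refine hmeager ?_
    show (Set.univ : Set (Sc (Option ℕ)))ᶜ ∈ residual _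
    refine mem_residual_iff.2 ⟨Set.range D, ?_, ?_, Set.countable_range D, ?_⟩
    · rintro t ⟨p, rfl⟩; exact hopen p
    · rintro t ⟨p, rfl⟩; exact hdense p
    · rw [Set.sInter_range, hempty]
      exact Set.empty_subset _
  obtain ⟨T, hT⟩ := hne
  refine ⟨T, xi_convTo F T, fun n => ?_⟩
  have hJ : {j : ℕ | some j ∈ T.1 ∧ some j ∈ (S n).1}.Infinite := by
    refine Set.infinite_of_forall_exists_gt (fun m => ?_)
    have := Set.mem_iInter.1 hT (n, m + 1)
    obtain ⟨j, hj1, hj2, hj3⟩ := this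
    exact ⟨j, ⟨hj3, hj2⟩, lt_of_lt_of_le (Nat.lt_succ_self m) hj1⟩
  exact Set.infinite_of_injOn_mapsTo (Option.some_injective ℕ).injOn
    (fun j hj => ⟨hj.1, hj.2⟩) hJ
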